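/- For all integers m ≥ 1, n ≥ 1 and k ≥ m, the recurrence N_m(n+1,k) = Σ_{i=0}^{m} C(k+i−m, i) · m^{\underline i} · k^{\underline{m−i}} · N_m(n, k+i−m) holds. (Equivalently, in terms of {n,k}_m = N_m(n,k)/k!: {n+1,k}_m = Σ_{i=0}^{m} C(k+i−m,i) · m^{\underline i} · {n, k+i−m}_m.) -/

import Mathlib

open Function

/-- Fiberwise counting for `Nat.card`. -/
lemma nat_card_fiberwise {α β : Type*} [Finite α] [Fintype β] (f : α → β) :
    Nat.card α = ∑ b : β, Nat.card {a // f a = b} := by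
  classical
  cases nonempty_fintype α
  simp_rw [Nat.card_eq_fintype_card]
  rw [← Fintype.card_sigma]
  exact Fintype.card_congr (Equiv.sigmaFiberEquiv f).symm

/-- Injections fixing a partial inverse correspond to embeddings of the complements. -/
noncomputable def extEquiv {m k : ℕ} (F : Finset (Fin k)) (g : ↥F → Fin m) (hg : Injective g) :
    {z : Fin m → Fin k // Injective z ∧ ∀ y : ↥F, z (g y) = ↑y} ≃
      ({i : Fin m // i ∉ Set.range g} ↪ {x : Fin k // x ∉ F}) where
  toFun z := ⟨fun i => ⟨z.1 i.1, fun hx =>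
      i.2 ⟨⟨z.1 i.1, hx⟩, z.2.1 (z.2.2 ⟨z.1 i.1, hx⟩)⟩⟩,
    fun a b hab => Subtype.ext (z.2.1 (congrArg Subtype.val hab))⟩
  invFun h := ⟨fun i => if hi : i ∈ Set.range g then ↑(hi.choose) else ↑(h ⟨i, hi⟩), by
    constructor
    · intro a b hab
      by_cases ha : a ∈ Set.range g <;> by_cases hb : b ∈ Set.range g <;>
          simp only [ha, hb, dif_pos, dif_neg, not_false_iff] at hab
      · rw [← ha.choose_spec, ← hb.choose_spec, Subtype.coe_injective hab]
      · exact absurd (hab ▸ (ha.choose).2) (h ⟨b, hb⟩).2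
      · exact absurd (hab ▸ (hb.choose).2) (h ⟨a, ha⟩).2
      · exact congrArg Subtype.val (h.injective (Subtype.ext hab))
    · intro y
      have hy : g y ∈ Set.range g := ⟨y, rfl⟩
      simp only [dif_pos hy]
      exact congrArg Subtype.val (hg hy.choose_spec)⟩
  left_inv z := by
    apply Subtype.ext
    funext i
    by_cases hi : i ∈ Set.range g
    · simp only [dif_pos hi]
      conv_rhs => rw [← hi.choose_spec]
      exact (z.2.2 hi.choose).symm
    · simp only [dif_neg hi]
      rfl
  right_inv h := by
    apply Function.Embedding.ext
    intro i
    apply Subtype.ext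
    simp only [Function.Embedding.coeFn_mk, dif_neg i.2]
    exact dif_neg i.2

lemma card_T {m k : ℕ} (F : Finset (Fin k)) (g : ↥F → Fin m) (hg : Injective g) :
    Nat.card {z : Fin m → Fin k // Injective z ∧ ∀ y : ↥F, z (g y) = ↑y} =
      (k - F.card).descFactorial (m - F.card) := by
  classical
  rw [Nat.card_congr (extEquiv F g hg), Nat.card_eq_fintype_card, Fintype.card_embedding_eq]
  have h1 : Fintype.card {x : Fin k // x ∉ F} = k - F.card := by
    simp [Fintype.card_subtype_compl]
  have h2 : Fintype.card {i : Fin m // i ∉ Set.range g} = m - F.card := by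
    rw [Fintype.card_subtype_compl]
    have h3 : Fintype.card {i : Fin m // i ∈ Set.range g} = F.card := by
      rw [Set.card_range_of_injective hg, Fintype.card_coe]
    rw [h3]
    simp
  rw [h1, h2]

/-- The number of injections `Fin m → Fin k` whose range contains a fixed set `F`. -/
lemma card_cover_fixed {m k : ℕ} (hm : 1 ≤ m) (F : Finset (Fin k)) :
    Nat.card {z : Fin m → Fin k // Injective z ∧ ∀ x ∈ F, ∃ i, z i = x} =
      m.descFactorial F.card * (k - F.card).descFactorial (m - F.card) := by
  classical
  by_cases hs : F.card ≤ m
  · haveI : Nonempty (Fin m) := Fin.pos_iff_nonempty.mp hm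
    set S := {z : Fin m → Fin k // Injective z ∧ ∀ x ∈ F, ∃ i, z i = x} with hS
    let Φ : S → (↥F → Fin m) := fun z y => Function.invFun z.1 ↑y
    have hfib : ∀ g : ↥F → Fin m, Nat.card {z : S // Φ z = g} =
        if Injective g then (k - F.card).descFactorial (m - F.card) else 0 := by
      intro g
      have e : {z : S // Φ z = g} ≃
          {z : Fin m → Fin k // Injective z ∧ ∀ y : ↥F, z (g y) = ↑y} :=
        { toFun := fun z => ⟨z.1.1, z.1.2.1, fun y => by
            obtain ⟨i, hi⟩ := z.1.2.2 y y.2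
            have h1 : z.1.1 (Function.invFun z.1.1 ↑y) = ↑y := Function.invFun_eq ⟨i, hi⟩
            have h2 : Φ z.1 y = g y := congrFun z.2 y
            rw [← h2]
            exact h1⟩
          invFun := fun z => ⟨⟨z.1, z.2.1, fun x hx => ⟨g ⟨x, hx⟩, z.2.2 ⟨x, hx⟩⟩⟩,
            funext fun y => z.2.1 (by
              rw [Function.invFun_eq ⟨g y, z.2.2 y⟩, z.2.2 y])⟩
          left_inv := fun z => Subtype.ext (Subtype.ext rfl)
          right_inv := fun z => Subtype.ext rfl }
      rw [Nat.card_congr e]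
      by_cases hg : Injective g
      · rw [if_pos hg, card_T F g hg]
      · rw [if_neg hg]
        have : IsEmpty {z : Fin m → Fin k // Injective z ∧ ∀ y : ↥F, z (g y) = ↑y} := by
          refine ⟨fun z => hg fun a b hab => ?_⟩
          have := (z.2.2 a).symm.trans ((congrArg z.1 hab).trans (z.2.2 b))
          exact Subtype.ext this
        exact Nat.card_of_isEmpty
    rw [nat_card_fiberwise Φ]
    simp_rw [hfib]
    rw [← Finset.sum_filter, Finset.sum_const, smul_eq_mul]
    congr 1
    rw [← Fintype.card_subtype,
      Fintype.card_congr (Equiv.subtypeInjectiveEquivEmbedding ↥F (Fin m)),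
      Fintype.card_embedding_eq, Fintype.card_coe, Fintype.card_fin]
  · push_neg at hs
    have : IsEmpty {z : Fin m → Fin k // Injective z ∧ ∀ x ∈ F, ∃ i, z i = x} := by
      refine ⟨fun z => absurd ?_ (not_le.mpr hs)⟩
      have hsub : F ⊆ Finset.image z.1 Finset.univ := fun x hx => by
        obtain ⟨i, hi⟩ := z.2.2 x hx
        exact Finset.mem_image.mpr ⟨i, Finset.mem_univ i, hi⟩
      calc F.card ≤ (Finset.image z.1 Finset.univ).card := Finset.card_le_card hsub
        _ ≤ Finset.univ.card := Finset.card_image_le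
        _ = m := by simp
    rw [Nat.card_of_isEmpty, Nat.descFactorial_eq_zero_iff_lt.mpr hs, Nat.zero_mul]

/-- `Nm m n k` is the number of `n`-tuples `(Y 1, ..., Y n)` of injective functions
`Y j : Fin m → Fin k` such that every element of `Fin k` lies in the image of at least
one `Y j`. -/
noncomputable def Nm (m n k : ℕ) : ℕ :=
  Nat.card {Y : Fin n → (Fin m → Fin k) //
    (∀ j, Function.Injective (Y j)) ∧ ∀ x : Fin k, ∃ j i, Y j i = x}

/-- Tuples of injections with union of images equal to `U` are counted by `Nm m n U.card`. -/
lemma card_union_eq (m n k : ℕ) (U : Finset (Fin k)) :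
    Nat.card {Y : Fin n → (Fin m → Fin k) //
        (∀ j, Injective (Y j)) ∧ (∀ j i, Y j i ∈ U) ∧ (∀ x ∈ U, ∃ j i, Y j i = x)} =
      Nm m n U.card := by
  classical
  have e1 : {Y : Fin n → (Fin m → Fin k) //
        (∀ j, Injective (Y j)) ∧ (∀ j i, Y j i ∈ U) ∧ (∀ x ∈ U, ∃ j i, Y j i = x)} ≃
      {Z : Fin n → Fin m → ↥U // (∀ j, Injective (Z j)) ∧ ∀ x : ↥U, ∃ j i, Z j i = x} :=
    { toFun := fun Y => ⟨fun j i => ⟨Y.1 j i, Y.2.2.1 j i⟩,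
        fun j a b hab => Y.2.1 j (congrArg Subtype.val hab),
        fun x => by obtain ⟨j, i, h⟩ := Y.2.2.2 x x.2; exact ⟨j, i, Subtype.ext h⟩⟩
      invFun := fun Z => ⟨fun j i => ↑(Z.1 j i),
        fun j a b hab => Z.2.1 j (Subtype.ext hab),
        fun j i => (Z.1 j i).2,
        fun x hx => by obtain ⟨j, i, h⟩ := Z.2.2 ⟨x, hx⟩; exact ⟨j, i, congrArg Subtype.val h⟩⟩
      left_inv := fun Y => rfl
      right_inv := fun Z => rfl }
  let eU : ↥U ≃ Fin U.card := U.equivFin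
  have e2 : {Z : Fin n → Fin m → ↥U // (∀ j, Injective (Z j)) ∧ ∀ x : ↥U, ∃ j i, Z j i = x} ≃
      {W : Fin n → Fin m → Fin U.card // (∀ j, Injective (W j)) ∧ ∀ x, ∃ j i, W j i = x} :=
    { toFun := fun Z => ⟨fun j i => eU (Z.1 j i),
        fun j a b hab => Z.2.1 j (eU.injective hab),
        fun x => by obtain ⟨j, i, h⟩ := Z.2.2 (eU.symm x)
                    exact ⟨j, i, by simp only []; rw [h]; simp⟩⟩
      invFun := fun W => ⟨fun j i => eU.symm (W.1 j i),
        fun j a b hab => W.2.1 j (eU.symm.injective hab),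
        fun x => by obtain ⟨j, i, h⟩ := W.2.2 (eU x)
                    exact ⟨j, i, by simp only []; rw [h]; simp⟩⟩
      left_inv := fun Z => Subtype.ext (by funext j i; simp)
      right_inv := fun W => Subtype.ext (by funext j i; simp) }
  exact Nat.card_congr (e1.trans e2)

/-- Splitting off the first injection of a covering tuple. -/
noncomputable def splitEquiv (m n k : ℕ) :
    {Y : Fin (n + 1) → (Fin m → Fin k) //
      (∀ j, Injective (Y j)) ∧ ∀ x : Fin k, ∃ j i, Y j i = x} ≃
    {p : (Fin m → Fin k) × (Fin n → (Fin m → Fin k)) //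
      (Injective p.1 ∧ ∀ j, Injective (p.2 j)) ∧
      ∀ x : Fin k, (∃ j i, p.2 j i = x) ∨ ∃ i, p.1 i = x} where
  toFun Y := ⟨(Y.1 0, fun j => Y.1 j.succ),
    ⟨Y.2.1 0, fun j => Y.2.1 j.succ⟩,
    fun x => by
      obtain ⟨j, i, h⟩ := Y.2.2 x
      induction j using Fin.cases with
      | zero => exact Or.inr ⟨i, h⟩
      | succ j => exact Or.inl ⟨j, i, h⟩⟩
  invFun p := ⟨Fin.cons p.1.1 p.1.2,
    fun j => by
      induction j using Fin.cases with
      | zero => simpa using p.2.1.1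
      | succ j => simpa using p.2.1.2 j,
    fun x => by
      rcases p.2.2 x with ⟨j, i, h⟩ | ⟨i, h⟩
      · exact ⟨j.succ, i, by simpa using h⟩
      · exact ⟨0, i, by simpa using h⟩⟩
  left_inv Y := Subtype.ext (by
    funext j
    induction j using Fin.cases with
    | zero => simp
    | succ j => simp)
  right_inv p := Subtype.ext (by
    apply Prod.ext
    · simp
    · funext j; simp)

/-- Splitting a fiber into the `n`-tuple part and the extra injection part. -/
noncomputable def fiberEquiv (m n k : ℕ) (U : Finset (Fin k)) :
    {w : {p : (Fin m → Fin k) × (Fin n → (Fin m → Fin k)) //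
        (Injective p.1 ∧ ∀ j, Injective (p.2 j)) ∧
        ∀ x : Fin k, (∃ j i, p.2 j i = x) ∨ ∃ i, p.1 i = x} //
      (Finset.univ.filter (fun x => ∃ j i, w.1.2 j i = x)) = U} ≃
    ({Y : Fin n → (Fin m → Fin k) //
        (∀ j, Injective (Y j)) ∧ (∀ j i, Y j i ∈ U) ∧ (∀ x ∈ U, ∃ j i, Y j i = x)} ×
     {z : Fin m → Fin k // Injective z ∧ ∀ x ∈ Uᶜ, ∃ i, z i = x}) where
  toFun q :=
    have hiff : ∀ x, (∃ j i, q.1.1.2 j i = x) ↔ x ∈ U := fun x => by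
      have := Finset.ext_iff.mp q.2 x
      simpa using this
    (⟨q.1.1.2, q.1.2.1.2, fun j i => (hiff _).mp ⟨j, i, rfl⟩,
        fun x hx => (hiff x).mpr hx⟩,
     ⟨q.1.1.1, q.1.2.1.1, fun x hx => by
        rcases q.1.2.2 x with h | h
        · exact absurd ((hiff x).mp h) (Finset.mem_compl.mp hx)
        · exact h⟩)
  invFun s := ⟨⟨(s.2.1, s.1.1), ⟨s.2.2.1, s.1.2.1⟩, fun x => by
      by_cases hx : x ∈ U
      · obtain ⟨j, i, h⟩ := s.1.2.2.2 x hx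
        exact Or.inl ⟨j, i, h⟩
      · obtain ⟨i, h⟩ := s.2.2.2 x (Finset.mem_compl.mpr hx)
        exact Or.inr ⟨i, h⟩⟩,
    by
      ext x
      simp only [Finset.mem_filter, Finset.mem_univ, true_and]
      constructor
      · rintro ⟨j, i, rfl⟩
        exact s.1.2.2.1 j i
      · intro hx
        exact s.1.2.2.2 x hx⟩
  left_inv q := Subtype.ext (Subtype.ext rfl)
  right_inv s := rfl

/-- The recurrence
`N_m(n+1,k) = Σ_{i=0}^{m} C(k+i-m, i) · m^{\underline i} · k^{\underline{m-i}} · N_m(n, k+i-m)`. -/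
theorem stmt3 (m n k : ℕ) (hm : 1 ≤ m) (hn : 1 ≤ n) (hk : m ≤ k) :
    Nm m (n + 1) k =
      ∑ i ∈ Finset.range (m + 1),
        Nat.choose (k + i - m) i * Nat.descFactorial m i *
          Nat.descFactorial k (m - i) * Nm m n (k + i - m) := by
  classical
  have step1 : Nm m (n + 1) k =
      Nat.card {p : (Fin m → Fin k) × (Fin n → (Fin m → Fin k)) //
        (Injective p.1 ∧ ∀ j, Injective (p.2 j)) ∧
        ∀ x : Fin k, (∃ j i, p.2 j i = x) ∨ ∃ i, p.1 i = x} :=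
    Nat.card_congr (splitEquiv m n k)
  let f : {p : (Fin m → Fin k) × (Fin n → (Fin m → Fin k)) //
        (Injective p.1 ∧ ∀ j, Injective (p.2 j)) ∧
        ∀ x : Fin k, (∃ j i, p.2 j i = x) ∨ ∃ i, p.1 i = x} → Finset (Fin k) :=
    fun w => Finset.univ.filter (fun x => ∃ j i, w.1.2 j i = x)
  rw [step1, nat_card_fiberwise f]
  have hfib : ∀ U : Finset (Fin k), Nat.card {w // f w = U} =
      Nm m n U.card *
        (m.descFactorial (k - U.card) * U.card.descFactorial (m - (k - U.card))) := by
    intro U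
    have h2 : U.card ≤ k := by simpa using Finset.card_le_univ U
    rw [Nat.card_congr (fiberEquiv m n k U), Nat.card_prod, card_union_eq,
      card_cover_fixed hm Uᶜ]
    have h1 : Uᶜ.card = k - U.card := by simp [Finset.card_compl]
    rw [h1, Nat.sub_sub_self h2]
  simp_rw [hfib]
  have hgroup : (∑ U : Finset (Fin k), Nm m n U.card *
        (m.descFactorial (k - U.card) * U.card.descFactorial (m - (k - U.card)))) =
      ∑ c ∈ Finset.range (k + 1), k.choose c * (Nm m n c *
        (m.descFactorial (k - c) * c.descFactorial (m - (k - c)))) := by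
    rw [← Finset.sum_fiberwise_of_maps_to (g := Finset.card)
      (fun U _ => Finset.mem_range.mpr (Nat.lt_succ_of_le (by simpa using Finset.card_le_univ U)))]
    refine Finset.sum_congr rfl fun c hc => ?_
    rw [Finset.sum_congr rfl (fun U hU => by rw [(Finset.mem_filter.mp hU).2]),
      Finset.sum_const, smul_eq_mul]
    congr 1
    have hp : Finset.univ.filter (fun U : Finset (Fin k) => U.card = c) =
        Finset.powersetCard c Finset.univ := by
      ext U
      simp [Finset.mem_powersetCard_univ]
    rw [hp, Finset.card_powersetCard]
    simp
  rw [hgroup]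
  have hsub : Finset.Ico (k - m) (k + 1) ⊆ Finset.range (k + 1) :=
    fun c hc => Finset.mem_range.mpr (Finset.mem_Ico.mp hc).2
  have hzero : ∀ c ∈ Finset.range (k + 1), c ∉ Finset.Ico (k - m) (k + 1) →
      k.choose c * (Nm m n c *
        (m.descFactorial (k - c) * c.descFactorial (m - (k - c)))) = 0 := by
    intro c hc hnc
    have hclt : c < k - m := by
      rcases Finset.mem_range.mp hc with h
      simp only [Finset.mem_Ico, not_and, not_lt] at hnc
      omega
    have : m < k - c := by omega
    rw [Nat.descFactorial_eq_zero_iff_lt.mpr this]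
    ring
  rw [← Finset.sum_subset hsub hzero, Finset.sum_Ico_eq_sum_range]
  have hb : k + 1 - (k - m) = m + 1 := by omega
  rw [hb]
  refine Finset.sum_congr rfl fun i hi => ?_
  have him : i ≤ m := Nat.lt_succ_iff.mp (Finset.mem_range.mp hi)
  have e1 : k - m + i = k + i - m := by omega
  have e2 : k - (k + i - m) = m - i := by omega
  have e3 : m - (m - i) = i := by omega
  rw [e1, e2, e3]
  have c1 : k.choose (k + i - m) = k.choose (m - i) := by
    rw [← Nat.choose_symm (show m - i ≤ k by omega)]
    congr 1
    omega
  have c2 : m.choose (m - i) = m.choose i := Nat.choose_symm him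
  rw [Nat.descFactorial_eq_factorial_mul_choose m (m - i),
    Nat.descFactorial_eq_factorial_mul_choose (k + i - m) i,
    Nat.descFactorial_eq_factorial_mul_choose m i,
    Nat.descFactorial_eq_factorial_mul_choose k (m - i), c1, c2]
  ring
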